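/- arXiv:1607.00190 — 2 statements merged into one kernel-verified Lean document; each statement's English description precedes it below -/
import Mathlib

section
/- Under the hypotheses of the Loeffel–Martin identity (ψ solves −ħ²ψ'' + qψ = Eψ with q real, decay at +∞ making ∫_y^∞|ψ|² finite), if Im E ≠ 0 and ψ is not identically zero near +∞, then ψ(y) ≠ 0 for every y ∈ ℝ. -/
open MeasureTheory Filter Set

private lemma aux_lim_zero (F : ℝ → ℝ) (hFm : MeasureTheory.IntegrableOn F (Set.Ici 0))
    (L : ℝ) (hL : Tendsto F atTop (nhds L)) : L = 0 := by
  by_contra h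
  have hev : ∀ᶠ y in atTop, |L| / 2 ≤ |F y| := by
    have := hL.eventually (eventually_abs_sub_lt L (by positivity : 0 < |L|/2))
    filter_upwards [this] with y hy
    have := abs_sub_abs_le_abs_sub L (F y)
    rw [abs_sub_comm] at hy
    linarith [abs_nonneg (F y)]
  obtain ⟨N, hN⟩ := (hev.and (eventually_ge_atTop (0:ℝ))).exists_forall_of_atTop
  have hconst : Integrable (fun _ : ℝ => |L|/2) (volume.restrict (Ici N)) := by
    refine Integrable.mono' ((hFm.mono_set (Ici_subset_Ici.mpr (hN N le_rfl).2)).abs) ?_ ?_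
    · exact aestronglyMeasurable_const
    · refine (ae_restrict_iff' measurableSet_Ici).mpr (ae_of_all _ fun y hy => ?_)
      simpa [abs_of_nonneg (by positivity : (0:ℝ) ≤ |L|/2)] using (hN y hy).1
  rw [integrable_const_iff] at hconst
  rcases hconst with h0 | hfin
  · exact h (by simpa [abs_eq_zero] using h0)
  · have hfin := hfin.measure_univ_lt_top
    simp [Measure.restrict_apply_univ, Real.volume_Ici] at hfin

private lemma aux_hasDeriv (hbar : ℝ) (hhbar : 0 < hbar) (q : ℝ → ℝ)
    (E : ℂ) (ψ : ℝ → ℂ) (hC2 : ContDiff ℝ 2 ψ)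
    (hODE : ∀ x : ℝ, -(hbar : ℂ) ^ 2 * deriv (deriv ψ) x + (q x : ℂ) * ψ x = E * ψ x)
    (x : ℝ) :
    HasDerivAt (fun y => ((starRingEnd ℂ) (ψ y) * deriv ψ y).im)
      (-(E.im) / hbar ^ 2 * ‖ψ x‖ ^ 2) x := by
  have hd1 : Differentiable ℝ ψ := hC2.differentiable (by norm_num)
  have hd2 : Differentiable ℝ (deriv ψ) := by
    have h2 := (contDiff_succ_iff_deriv.mp (by exact_mod_cast hC2 : ContDiff ℝ ((1:ℕ∞)+1) ψ)).2.2
    exact h2.differentiable (by norm_num)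
  have hψ'' : deriv (deriv ψ) x = ((q x : ℂ) - E) * ψ x / (hbar : ℂ) ^ 2 := by
    have h := hODE x
    have hb : ((hbar : ℂ)) ^ 2 ≠ 0 := by
      simpa using pow_ne_zero 2 (Complex.ofReal_ne_zero.mpr hhbar.ne')
    rw [eq_div_iff hb]
    linear_combination -h
  have h1 : HasDerivAt (fun y => (starRingEnd ℂ) (ψ y) * deriv ψ y)
      ((starRingEnd ℂ) (deriv ψ x) * deriv ψ x + (starRingEnd ℂ) (ψ x) * deriv (deriv ψ) x) x :=
    HasDerivAt.mul ((hd1 x).hasDerivAt.star) ((hd2 x).hasDerivAt)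
  have h2 : HasDerivAt (fun y => ((starRingEnd ℂ) (ψ y) * deriv ψ y).im)
      (Complex.imCLM ((starRingEnd ℂ) (deriv ψ x) * deriv ψ x + (starRingEnd ℂ) (ψ x) * deriv (deriv ψ) x)) x :=
    (Complex.imCLM.hasFDerivAt.comp_hasDerivAt x h1)
  convert h2 using 1
  have hsq : ((starRingEnd ℂ) (ψ x) * ψ x) = (‖ψ x‖ ^ 2 : ℝ) := by
    rw [Complex.conj_mul']
    norm_cast
  simp only [Complex.imCLM_apply, Complex.add_im, hψ'']
  have hkey : (starRingEnd ℂ) (ψ x) * (((q x : ℂ) - E) * ψ x / (hbar:ℂ)^2)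
      = (((q x : ℂ) - E) / (hbar:ℂ)^2) * ((‖ψ x‖ ^ 2 : ℝ) : ℂ) := by
    rw [← hsq]; ring
  rw [hkey]
  have him : ((starRingEnd ℂ) (deriv ψ x) * deriv ψ x).im = 0 := by
    simp [Complex.mul_im]
    ring
  rw [him]
  simp only [div_eq_mul_inv, ← Complex.ofReal_pow, ← Complex.ofReal_inv, Complex.mul_im,
    Complex.sub_im, Complex.sub_re, Complex.ofReal_im, Complex.ofReal_re, zero_add]
  ring

/-- under the hypotheses of the Loeffel–Martin identity, if Im E ≠ 0 and ψ is
not identically zero near +∞, then ψ never vanishes on ℝ. -/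
theorem stmt_8 (hbar : ℝ) (hhbar : 0 < hbar) (q : ℝ → ℝ) (hq : Continuous q)
    (E : ℂ) (ψ : ℝ → ℂ) (hC2 : ContDiff ℝ 2 ψ)
    (hODE : ∀ x : ℝ, -(hbar : ℂ) ^ 2 * deriv (deriv ψ) x + (q x : ℂ) * ψ x = E * ψ x)
    (hψL2 : MeasureTheory.IntegrableOn (fun s => ‖ψ s‖ ^ 2) (Set.Ici (0 : ℝ)))
    (hψ'L2 : MeasureTheory.IntegrableOn (fun s => ‖deriv ψ s‖ ^ 2) (Set.Ici (0 : ℝ)))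
    (hint : ∀ y : ℝ, MeasureTheory.IntegrableOn (fun s => ‖ψ s‖ ^ 2) (Set.Ici y))
    (hImE : E.im ≠ 0)
    (hnontriv : ∀ y : ℝ, ∃ s : ℝ, y < s ∧ ψ s ≠ 0) :
    ∀ y : ℝ, ψ y ≠ 0 := by
  intro y hzero
  have hcψ : Continuous ψ := hC2.continuous
  have hcψ' : Continuous (deriv ψ) := by
    have h2 := (contDiff_succ_iff_deriv.mp (by exact_mod_cast hC2 : ContDiff ℝ ((1:ℕ∞)+1) ψ)).2.2
    exact h2.continuous
  set F : ℝ → ℝ := fun x => ((starRingEnd ℂ) (ψ x) * deriv ψ x).im with hFdef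
  set F' : ℝ → ℝ := fun x => -(E.im) / hbar ^ 2 * ‖ψ x‖ ^ 2 with hF'def
  have hF : ∀ x, HasDerivAt F (F' x) x := fun x =>
    aux_hasDeriv hbar hhbar q E ψ hC2 hODE x
  have hcn : Continuous fun x : ℝ => ‖ψ x‖ ^ 2 := (hcψ.norm.pow 2)
  have hcF' : Continuous F' := continuous_const.mul hcn
  have hcF : Continuous F := Complex.continuous_im.comp ((continuous_star.comp hcψ).mul hcψ')
  set G : ℝ → ℝ := fun a => ∫ s in Ici a, ‖ψ s‖ ^ 2 with hGdef
  -- FTC for F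
  have hFTC : ∀ a b : ℝ, ∫ x in a..b, F' x = F b - F a := fun a b =>
    intervalIntegral.integral_eq_sub_of_hasDerivAt (fun x _ => hF x)
      (hcF'.intervalIntegrable a b)
  -- interval integral of ‖ψ‖² equals difference of tails
  have hGdiff : ∀ a b : ℝ, a ≤ b → (∫ x in a..b, ‖ψ x‖ ^ 2) = G a - G b := by
    intro a b hab
    have hsplit : G a = (∫ x in Ico a b, ‖ψ x‖ ^ 2) + G b := by
      show (∫ s in Ici a, ‖ψ s‖ ^ 2) = (∫ x in Ico a b, ‖ψ x‖ ^ 2) + ∫ s in Ici b, ‖ψ s‖ ^ 2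
      rw [← Set.Ico_union_Ici_eq_Ici hab]
      exact setIntegral_union ((Set.Iio_disjoint_Ici le_rfl).mono_left Set.Ico_subset_Iio_self)
        measurableSet_Ici ((hint a).mono_set Set.Ico_subset_Ici_self) (hint b)
    have h2 : (∫ x in a..b, ‖ψ x‖ ^ 2) = ∫ x in Ico a b, ‖ψ x‖ ^ 2 := by
      rw [intervalIntegral.integral_of_le hab, integral_Ioc_eq_integral_Ioo,
        integral_Ico_eq_integral_Ioo]
    linarith
  -- conservation law
  have hconst : ∀ a b : ℝ, a ≤ b →
      hbar ^ 2 * F a - E.im * G a = hbar ^ 2 * F b - E.im * G b := by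
    intro a b hab
    have h1 := hFTC a b
    have h2 : (∫ x in a..b, F' x) = -(E.im) / hbar ^ 2 * (G a - G b) := by
      rw [hF'def]
      simp only []
      rw [intervalIntegral.integral_const_mul, hGdiff a b hab]
    have hb2 : hbar ^ 2 ≠ 0 := by positivity
    rw [h2] at h1
    field_simp at h1
    linarith
  -- G tends to 0
  have hGlim : Tendsto G atTop (nhds 0) := by
    have hIoi : IntegrableOn (fun s => ‖ψ s‖ ^ 2) (Ioi (0:ℝ)) :=
      hψL2.mono_set Set.Ioi_subset_Ici_self
    have h1 : Tendsto (fun b => ∫ x in (0:ℝ)..b, ‖ψ x‖ ^ 2) atTop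
        (nhds (∫ s in Ioi (0:ℝ), ‖ψ s‖ ^ 2)) :=
      intervalIntegral_tendsto_integral_Ioi 0 hIoi tendsto_id
    have hG0 : G 0 = ∫ s in Ioi (0:ℝ), ‖ψ s‖ ^ 2 := by
      rw [hGdef]; exact integral_Ici_eq_integral_Ioi
    have heq : ∀ᶠ b in atTop, G 0 - (∫ x in (0:ℝ)..b, ‖ψ x‖ ^ 2) = G b := by
      filter_upwards [eventually_ge_atTop (0:ℝ)] with b hb
      rw [hGdiff 0 b hb]; ring
    have := (tendsto_const_nhds.sub h1).congr' heq
    simpa [hG0] using this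
  -- F is integrable on Ici 0
  have hFint : IntegrableOn F (Ici (0:ℝ)) := by
    refine Integrable.mono' (((hψL2.add hψ'L2).div_const 2)) (hcF.aestronglyMeasurable.restrict) ?_
    refine ae_of_all _ fun x => ?_
    have h1 : |F x| ≤ ‖(starRingEnd ℂ) (ψ x) * deriv ψ x‖ :=
      Complex.abs_im_le_norm ((starRingEnd ℂ) (ψ x) * deriv ψ x)
    have h2 : ‖(starRingEnd ℂ) (ψ x) * deriv ψ x‖ = ‖ψ x‖ * ‖deriv ψ x‖ := by
      rw [norm_mul]; simp
    rw [Real.norm_eq_abs]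
    simp only [Pi.add_apply]
    nlinarith [sq_nonneg (‖ψ x‖ - ‖deriv ψ x‖), norm_nonneg (ψ x), norm_nonneg (deriv ψ x)]
  -- F tends to a limit, which must be 0
  have hF'int : IntegrableOn F' (Ioi (0:ℝ)) :=
    ((hψL2.mono_set Set.Ioi_subset_Ici_self).const_mul _)
  have hFlim0 : Tendsto F atTop (nhds (F 0 + ∫ s in Ioi (0:ℝ), F' s)) := by
    have h1 : Tendsto (fun b => ∫ x in (0:ℝ)..b, F' x) atTop
        (nhds (∫ s in Ioi (0:ℝ), F' s)) :=
      intervalIntegral_tendsto_integral_Ioi 0 hF'int tendsto_id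
    have heq : ∀ᶠ b in atTop, F 0 + (∫ x in (0:ℝ)..b, F' x) = F b := by
      refine Eventually.of_forall fun b => ?_
      rw [hFTC 0 b]; ring
    exact (tendsto_const_nhds.add h1).congr' heq
  have hL0 : F 0 + (∫ s in Ioi (0:ℝ), F' s) = 0 := aux_lim_zero F hFint _ hFlim0
  have hFlim : Tendsto F atTop (nhds 0) := by rwa [hL0] at hFlim0
  -- identity: hbar² F y = E.im * G y
  have hid : hbar ^ 2 * F y - E.im * G y = 0 := by
    have ht : Tendsto (fun b => hbar ^ 2 * F b - E.im * G b) atTop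
        (nhds (hbar ^ 2 * 0 - E.im * 0)) := (tendsto_const_nhds.mul hFlim).sub
          (tendsto_const_nhds.mul hGlim)
    have hc : Tendsto (fun b => hbar ^ 2 * F b - E.im * G b) atTop
        (nhds (hbar ^ 2 * F y - E.im * G y)) := by
      refine Tendsto.congr' ?_ (tendsto_const_nhds)
      filter_upwards [eventually_ge_atTop y] with b hb
      exact hconst y b hb
    have := tendsto_nhds_unique hc ht
    simpa using this
  have hFy : F y = 0 := by rw [hFdef]; simp [hzero]
  have hGy : G y = 0 := by
    rw [hFy] at hid
    have : E.im * G y = 0 := by linarith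
    rcases mul_eq_zero.mp this with h | h
    · exact absurd h hImE
    · exact h
  -- G y = 0 forces ψ ≡ 0 a.e. on Ici y, contradicting hnontriv
  have hae : (fun s => ‖ψ s‖ ^ 2) =ᵐ[volume.restrict (Ici y)] 0 := by
    refine (integral_eq_zero_iff_of_nonneg_ae ?_ (hint y)).mp hGy
    exact ae_of_all _ fun x => by positivity
  obtain ⟨s, hys, hψs⟩ := hnontriv y
  have hae2 : ∀ᵐ x ∂(volume : Measure ℝ), x ∈ Ici y → ‖ψ x‖ ^ 2 = 0 := by
    rw [← ae_restrict_iff' measurableSet_Ici]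
    exact hae
  set U : Set ℝ := Ioi y ∩ ψ ⁻¹' ({0}ᶜ) with hUdef
  have hUopen : IsOpen U := isOpen_Ioi.inter (isOpen_compl_singleton.preimage hcψ)
  have hUsub : U ⊆ {x | ¬(x ∈ Ici y → ‖ψ x‖ ^ 2 = 0)} := by
    intro x hx
    obtain ⟨hx1, hx2⟩ := hx
    simp only [Set.mem_setOf_eq]
    intro himp
    have h0 := himp (Set.mem_Ici.mpr (le_of_lt hx1))
    have hne : ψ x ≠ 0 := by simpa using hx2
    have : ψ x = 0 := by
      have hn : ‖ψ x‖ = 0 := by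
        nlinarith [norm_nonneg (ψ x)]
      exact norm_eq_zero.mp hn
    exact hne this
  have hU0 : volume U = 0 := measure_mono_null hUsub hae2
  have hUpos : 0 < volume U :=
    hUopen.measure_pos volume ⟨s, hys, by simpa using hψs⟩
  exact absurd hU0 hUpos.ne'
end

section
/- Let ψ : ℝ → ℂ be twice differentiable, V_y(x) = y(y² − 3x²) + i·x(x² − 3y²) for a fixed y ∈ ℝ, and suppose −ψ'' + V_y·ψ = E·ψ with E > 0 real, with ψ, ψ' decaying fast enough at ±∞ so all integrals converge. Then for every x with x ≥ √3·|y|: Im(conjugate(ψ(x))·ψ'(x)) = −∫_x^∞ (s² − 3y²)·s·|ψ(s)|² ds, and this quantity is strictly negative provided ψ does not vanish identically on (x, ∞). -/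
open MeasureTheory Set Filter

lemma my_hasDerivAt_im {f : ℝ → ℂ} {f' : ℂ} {x : ℝ} (h : HasDerivAt f f' x) :
    HasDerivAt (fun t => (f t).im) f'.im x := by
  exact (Complex.imCLM.hasFDerivAt.comp_hasDerivAt x h)

lemma my_hasDerivAt_conj {f : ℝ → ℂ} {f' : ℂ} {x : ℝ} (h : HasDerivAt f f' x) :
    HasDerivAt (fun t => starRingEnd ℂ (f t)) (starRingEnd ℂ f') x := by
  exact ((Complex.conjCLE.toContinuousLinearMap).hasFDerivAt.comp_hasDerivAt x h)



/-- Loeffel–Martin for the translated cubic: if -ψ'' + V_yψ = Eψ with E > 0,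
V_y(x) = y(y² - 3x²) + ix(x² - 3y²), with decay at +∞, then for x ≥ √3|y|,
Im(conj(ψ(x))ψ'(x)) = -∫_x^∞ (s² - 3y²)s|ψ(s)|² ds, strictly negative if ψ ≢ 0 on (x,∞). -/
theorem stmt_9 (y : ℝ) (E : ℝ) (hE : 0 < E) (ψ : ℝ → ℂ) (hC2 : ContDiff ℝ 2 ψ)
    (Vy : ℝ → ℂ)
    (hVy : ∀ x : ℝ, Vy x = ((y * (y ^ 2 - 3 * x ^ 2) : ℝ) : ℂ)
      + Complex.I * ((x * (x ^ 2 - 3 * y ^ 2) : ℝ) : ℂ))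
    (hODE : ∀ x : ℝ, -deriv (deriv ψ) x + Vy x * ψ x = (E : ℂ) * ψ x)
    (hdecay : Filter.Tendsto (fun s => starRingEnd ℂ (ψ s) * deriv ψ s)
      Filter.atTop (nhds 0))
    (hint : ∀ x : ℝ, MeasureTheory.IntegrableOn
      (fun s => (s ^ 2 - 3 * y ^ 2) * s * ‖ψ s‖ ^ 2) (Set.Ici x)) :
    ∀ x : ℝ, Real.sqrt 3 * |y| ≤ x →
      ((starRingEnd ℂ (ψ x) * deriv ψ x).im
          = -∫ s in Set.Ici x, (s ^ 2 - 3 * y ^ 2) * s * ‖ψ s‖ ^ 2) ∧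
      ((∃ s ∈ Set.Ioi x, ψ s ≠ 0) → (starRingEnd ℂ (ψ x) * deriv ψ x).im < 0) := by
  intro x hx
  have h3 : (Real.sqrt 3 * |y|) ^ 2 = 3 * y ^ 2 := by
    rw [mul_pow, Real.sq_sqrt (by norm_num), sq_abs]
  have hxy0 : (0 : ℝ) ≤ Real.sqrt 3 * |y| := by positivity
  have hx0 : (0 : ℝ) ≤ x := le_trans hxy0 hx
  set f : ℝ → ℝ := fun s => (s ^ 2 - 3 * y ^ 2) * s * ‖ψ s‖ ^ 2 with hf
  have hψd : Differentiable ℝ ψ := hC2.differentiable (by norm_num)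
  have hC1 : ContDiff ℝ 1 (deriv ψ) := by
    have h2 : ContDiff ℝ (1 + 1) ψ := by
      have : (1 + 1 : WithTop ℕ∞) = 2 := by norm_num
      rw [this]; exact hC2
    exact (contDiff_succ_iff_deriv.mp h2).2.2
  have hψ'd : Differentiable ℝ (deriv ψ) := hC1.differentiable (by norm_num)
  have key : ∀ s : ℝ, HasDerivAt (fun t => (starRingEnd ℂ (ψ t) * deriv ψ t).im) (f s) s := by
    intro s
    have hG : HasDerivAt (fun t => starRingEnd ℂ (ψ t) * deriv ψ t)
        (starRingEnd ℂ (deriv ψ s) * deriv ψ s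
          + starRingEnd ℂ (ψ s) * deriv (deriv ψ) s) s :=
      (my_hasDerivAt_conj (hψd s).hasDerivAt).mul (hψ'd s).hasDerivAt
    have h := my_hasDerivAt_im hG
    convert h using 1
    have hpp : deriv (deriv ψ) s = Vy s * ψ s - (E : ℂ) * ψ s := by
      have h0 := hODE s
      linear_combination -h0
    rw [hpp, hVy s]
    simp only [hf, Complex.add_im, Complex.mul_im, Complex.mul_re, Complex.sub_im,
      Complex.sub_re, Complex.add_re, Complex.I_re, Complex.I_im, Complex.ofReal_re,
      Complex.ofReal_im, Complex.conj_re, Complex.conj_im,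
      Complex.sq_norm, Complex.normSq_apply]
    ring
  have hg0 : Tendsto (fun s => (starRingEnd ℂ (ψ s) * deriv ψ s).im) atTop (nhds 0) := by
    have h := (Complex.continuous_im.tendsto (0 : ℂ)).comp hdecay
    simp only [Complex.zero_im] at h
    exact h
  have hIoi : ∫ s in Ioi x, f s = 0 - (starRingEnd ℂ (ψ x) * deriv ψ x).im :=
    integral_Ioi_of_hasDerivAt_of_tendsto (key x).continuousAt.continuousWithinAt
      (fun s _ => key s) ((hint x).mono_set Ioi_subset_Ici_self) hg0
  have hIci : ∫ s in Ici x, f s = ∫ s in Ioi x, f s := integral_Ici_eq_integral_Ioi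
  have hmain : (starRingEnd ℂ (ψ x) * deriv ψ x).im = -∫ s in Ici x, f s := by
    rw [hIci, hIoi]; ring
  refine ⟨hmain, ?_⟩
  rintro ⟨s₀, hs₀, hψs₀⟩
  have hnn : ∀ s ∈ Ici x, 0 ≤ f s := by
    intro s hs
    have hs' : Real.sqrt 3 * |y| ≤ s := le_trans hx hs
    have : (Real.sqrt 3 * |y|) ^ 2 ≤ s ^ 2 := pow_le_pow_left₀ hxy0 hs' 2
    have h1 : 3 * y ^ 2 ≤ s ^ 2 := h3 ▸ this
    exact mul_nonneg (mul_nonneg (by linarith) (le_trans hx0 hs)) (by positivity)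
  have hcont : Continuous f :=
    (((continuous_pow 2).sub continuous_const).mul continuous_id).mul
      ((hC2.continuous.norm).pow 2)
  have hU : IsOpen {s : ℝ | 0 < f s} := isOpen_lt continuous_const hcont
  have hs₀pos : 0 < f s₀ := by
    have h1 : Real.sqrt 3 * |y| < s₀ := lt_of_le_of_lt hx hs₀
    have h2 : (Real.sqrt 3 * |y|) ^ 2 < s₀ ^ 2 := pow_lt_pow_left₀ h1 hxy0 (by norm_num)
    have h4 : 3 * y ^ 2 < s₀ ^ 2 := h3 ▸ h2
    have h5 : 0 < s₀ := lt_of_le_of_lt hx0 hs₀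
    have h6 : 0 < ‖ψ s₀‖ := norm_pos_iff.mpr hψs₀
    have : 0 < ‖ψ s₀‖ ^ 2 := by positivity
    exact mul_pos (mul_pos (by linarith) h5) this
  have hpos : 0 < ∫ s in Ici x, f s := by
    rw [setIntegral_pos_iff_support_of_nonneg_ae
      (ae_restrict_of_forall_mem measurableSet_Ici hnn) (hint x)]
    have hsub : {s : ℝ | 0 < f s} ∩ Ioi x ⊆ Function.support f ∩ Ici x :=
      fun s hs => ⟨ne_of_gt hs.1, (le_of_lt (mem_Ioi.mp hs.2) : x ≤ s)⟩
    refine lt_of_lt_of_le ?_ (measure_mono hsub)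
    exact (hU.inter isOpen_Ioi).measure_pos volume ⟨s₀, hs₀pos, hs₀⟩
  rw [hmain]
  linarith
end
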